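/- arXiv:2305.10575 — 4 statements merged into one kernel-verified Lean document; each statement's English description precedes it below -/
import Mathlib

section
/- There exist universal constants C > 0 and k ≥ 1 such that for every n ≥ 2 and every integer a ≥ 1, every matrix A ∈ ℤ^{n×n} whose entries satisfy |A_{ij}| ≤ 2^a and which has at least two distinct complex eigenvalues satisfies mindgap(A) ≥ 2^{−C a n² (log₂(n a + 2))^k}. -/
open Matrix Polynomial

section Aux

variable {m : Type*} [Fintype m] [DecidableEq m]

private lemma spec_iff_eig_aux {K : Type*} [Field K] (M : Matrix m m K) (x : K) :
    x ∈ spectrum K M ↔ ∃ v, v ≠ 0 ∧ M.mulVec v = x • v := by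
  rw [spectrum.mem_iff, Matrix.isUnit_iff_isUnit_det, isUnit_iff_ne_zero, not_ne_iff,
    ← Matrix.exists_mulVec_eq_zero_iff]
  constructor
  · rintro ⟨v, hv, h⟩
    refine ⟨v, hv, ?_⟩
    rw [Matrix.sub_mulVec] at h
    have h1 : (algebraMap K (Matrix m m K) x).mulVec v = x • v := by
      rw [Algebra.algebraMap_eq_smul_one, Matrix.smul_mulVec, Matrix.one_mulVec]
    rw [h1, sub_eq_zero] at h
    exact h.symm
  · rintro ⟨v, hv, h⟩
    refine ⟨v, hv, ?_⟩
    rw [Matrix.sub_mulVec, Algebra.algebraMap_eq_smul_one, Matrix.smul_mulVec,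
      Matrix.one_mulVec, h, sub_self]

private lemma spec_iff_root_aux {K : Type*} [Field K] (M : Matrix m m K) (x : K) :
    x ∈ spectrum K M ↔ M.charpoly.IsRoot x := by
  rw [spectrum.mem_iff, Matrix.isUnit_iff_isUnit_det, isUnit_iff_ne_zero, not_ne_iff,
    Polynomial.IsRoot, Matrix.charpoly, ← Polynomial.coe_evalRingHom, RingHom.map_det]
  congr! 2
  ext i j
  by_cases h : i = j <;>
    simp [Matrix.charmatrix_apply, Matrix.map_apply, h, Algebra.algebraMap_eq_smul_one,
      Matrix.sub_apply, Matrix.smul_apply, Matrix.one_apply]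

private lemma spec_transpose_aux {K : Type*} [Field K] (M : Matrix m m K) (x : K)
    (h : x ∈ spectrum K M) : x ∈ spectrum K Mᵀ := by
  rw [spectrum.mem_iff, Matrix.isUnit_iff_isUnit_det] at h ⊢
  rwa [show algebraMap K (Matrix m m K) x - Mᵀ = (algebraMap K (Matrix m m K) x - M)ᵀ by
    rw [Matrix.transpose_sub]; congr 1
    rw [Algebra.algebraMap_eq_smul_one, Matrix.transpose_smul, Matrix.transpose_one],
    Matrix.det_transpose]

private lemma eig_bound_aux (M : Matrix m m ℂ) (x : ℂ) (r : ℝ)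
    (hM : ∀ i j, ‖M i j‖ ≤ r) (hx : x ∈ spectrum ℂ M) :
    ‖x‖ ≤ (Fintype.card m) * r := by
  obtain ⟨v, hv, hMv⟩ := (spec_iff_eig_aux M x).mp hx
  have hne : (Finset.univ : Finset m).Nonempty := by
    rcases Function.ne_iff.mp hv with ⟨i, hi⟩
    exact ⟨i, Finset.mem_univ i⟩
  obtain ⟨i, -, hi⟩ := Finset.exists_max_image Finset.univ (fun j => ‖v j‖) hne
  have hvi : v i ≠ 0 := by
    rcases Function.ne_iff.mp hv with ⟨j, hj⟩
    intro h
    have := hi j (Finset.mem_univ j)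
    rw [h, norm_zero] at this
    exact hj (norm_le_zero_iff.mp this)
  have hvi' : 0 < ‖v i‖ := norm_pos_iff.mpr hvi
  have key : ‖x‖ * ‖v i‖ ≤ (Fintype.card m) * r * ‖v i‖ := by
    calc ‖x‖ * ‖v i‖ = ‖(x • v) i‖ := by simp [norm_mul]
      _ = ‖(M.mulVec v) i‖ := by rw [hMv]
      _ = ‖∑ j, M i j * v j‖ := by rw [Matrix.mulVec, dotProduct]
      _ ≤ ∑ j, ‖M i j * v j‖ := norm_sum_le _ _
      _ ≤ ∑ j : m, r * ‖v i‖ := by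
          refine Finset.sum_le_sum fun j _ => ?_
          rw [norm_mul]
          exact mul_le_mul (hM i j) (hi j (Finset.mem_univ j)) (norm_nonneg _)
            (le_trans (norm_nonneg _) (hM i j))
      _ = (Fintype.card m) * r * ‖v i‖ := by
          rw [Finset.sum_const, Finset.card_univ, nsmul_eq_mul]; ring
  exact le_of_mul_le_mul_right key hvi'

private lemma multiset_norm_prod_le_aux (R : ℝ) (hR : 0 ≤ R) (s : Multiset ℂ)
    (h : ∀ a ∈ s, ‖a‖ ≤ R) : (s.map fun a => ‖a‖).prod ≤ R ^ Multiset.card s := by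
  induction s using Multiset.induction_on with
  | empty => simp
  | cons a s ih =>
    simp only [Multiset.map_cons, Multiset.prod_cons, Multiset.card_cons, pow_succ]
    have h1 : ‖a‖ ≤ R := h a (Multiset.mem_cons_self a s)
    have h2 : (s.map fun a => ‖a‖).prod ≤ R ^ Multiset.card s :=
      ih fun b hb => h b (Multiset.mem_cons_of_mem hb)
    have hprodnn : 0 ≤ (s.map fun a => ‖a‖).prod :=
      Multiset.prod_nonneg (by intro x hx; obtain ⟨b, -, rfl⟩ := Multiset.mem_map.mp hx
                               exact norm_nonneg b)
    calc ‖a‖ * (s.map fun a => ‖a‖).prod ≤ R * R ^ Multiset.card s :=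
      mul_le_mul h1 h2 hprodnn hR
      _ = R ^ Multiset.card s * R := mul_comm _ _

private lemma nonzero_eig_lb_aux (B : Matrix m m ℤ) (x : ℂ) (R : ℝ) (hR : 1 ≤ R)
    (hspec : ∀ z : ℂ, z ∈ spectrum ℂ (B.map (Int.cast : ℤ → ℂ)) → ‖z‖ ≤ R)
    (hx : x ∈ spectrum ℂ (B.map (Int.cast : ℤ → ℂ))) (hx0 : x ≠ 0) :
    1 ≤ ‖x‖ * R ^ (Fintype.card m - 1) := by
  have hpm : (B.charpoly).Monic := B.charpoly_monic
  have hpne : B.charpoly ≠ 0 := hpm.ne_zero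
  set k : ℕ := (B.charpoly).rootMultiplicity 0 with hk
  set r : ℤ[X] := B.charpoly /ₘ (X - C 0) ^ k with hr
  have hfac : (X - C 0) ^ k * r = B.charpoly :=
    Polynomial.pow_mul_divByMonic_rootMultiplicity_eq B.charpoly 0
  have hr0 : r.eval 0 ≠ 0 := Polynomial.eval_divByMonic_pow_rootMultiplicity_ne_zero 0 hpne
  have hXk : ((X - C 0 : ℤ[X]) ^ k).Monic := (monic_X_sub_C 0).pow k
  have hrm : r.Monic := hXk.of_mul_monic_left (by rw [hfac]; exact hpm)
  set q : ℂ[X] := r.map (Int.castRingHom ℂ) with hq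
  have hqm : q.Monic := hrm.map _
  have hmapcast : B.map (Int.cast : ℤ → ℂ) = B.map (Int.castRingHom ℂ) := rfl
  have hcharfac : (B.map (Int.cast : ℤ → ℂ)).charpoly
      = ((X - C 0 : ℤ[X]) ^ k).map (Int.castRingHom ℂ) * q := by
    rw [hmapcast, Matrix.charpoly_map, ← hfac, Polynomial.map_mul]
  have hxroot : q.IsRoot x := by
    have hroot : (B.map (Int.cast : ℤ → ℂ)).charpoly.IsRoot x := (spec_iff_root_aux _ x).mp hx
    rw [hcharfac, IsRoot, eval_mul] at hroot
    rcases mul_eq_zero.mp hroot with h | h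
    · exfalso
      apply hx0
      simp only [Polynomial.map_pow, Polynomial.map_sub, map_X, map_C, eq_intCast,
        Int.cast_zero, sub_zero, eval_pow, eval_X] at h
      exact (pow_eq_zero_iff'.mp h).1
    · exact h
  have hsplit : q.Splits := IsAlgClosed.splits q
  have hqe : q = (q.roots.map fun a => X - C a).prod := by
    conv_lhs => rw [hsplit.eq_prod_roots_of_monic hqm]
  have heval0 : ‖q.eval 0‖ = (q.roots.map fun a => ‖a‖).prod := by
    conv_lhs => rw [hqe]
    rw [eval_multiset_prod, Multiset.map_map, (show ∀ z : ℂ, ‖z‖ = normHom z from fun _ => rfl),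
      map_multiset_prod, Multiset.map_map]
    congr 1
    ext a
    simp [normHom]
  have h1le : (1 : ℝ) ≤ (q.roots.map fun a => ‖a‖).prod := by
    rw [← heval0]
    have heq : q.eval 0 = ((r.eval 0 : ℤ) : ℂ) := by
      rw [hq, Polynomial.eval_map, eval₂_at_zero, coeff_zero_eq_eval_zero]; rfl
    rw [heq]
    have h1 : (1 : ℤ) ≤ |r.eval 0| := Int.one_le_abs hr0
    have h2 : (1 : ℝ) ≤ |((r.eval 0 : ℤ) : ℝ)| := by exact_mod_cast h1
    rwa [Complex.norm_intCast]
  have hxmem : x ∈ q.roots := by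
    rw [mem_roots hqm.ne_zero]; exact hxroot
  obtain ⟨s, hs⟩ := Multiset.exists_cons_of_mem hxmem
  have hroots_le : ∀ a ∈ s, ‖a‖ ≤ R := by
    intro a ha
    apply hspec
    rw [spec_iff_root_aux _ a, hcharfac]
    have : q.IsRoot a :=
      (mem_roots hqm.ne_zero).mp (by rw [hs]; exact Multiset.mem_cons_of_mem ha)
    exact Polynomial.root_mul_left_of_isRoot _ this
  have hscard : Multiset.card s ≤ Fintype.card m - 1 := by
    have h1 : Multiset.card q.roots ≤ q.natDegree := q.card_roots'
    have h2 : q.natDegree ≤ (B.charpoly).natDegree := by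
      rw [hq, r.natDegree_map_eq_of_injective (Int.cast_injective)]
      have := Polynomial.natDegree_mul (hXk.ne_zero) (hrm.ne_zero)
      rw [hfac] at this
      omega
    have h3 : (B.charpoly).natDegree = Fintype.card m := B.charpoly_natDegree_eq_dim
    have h4 : Multiset.card q.roots = Multiset.card s + 1 := by rw [hs]; simp
    omega
  have hprod_s : (s.map fun a => ‖a‖).prod ≤ R ^ (Fintype.card m - 1) :=
    le_trans (multiset_norm_prod_le_aux R (le_trans zero_le_one hR) s hroots_le)
      (pow_le_pow_right₀ hR hscard)
  calc (1:ℝ) ≤ (q.roots.map fun a => ‖a‖).prod := h1le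
    _ = ‖x‖ * (s.map fun a => ‖a‖).prod := by rw [hs]; simp
    _ ≤ ‖x‖ * R ^ (Fintype.card m - 1) :=
        mul_le_mul_of_nonneg_left hprod_s (norm_nonneg _)

end Aux

/-- The "eigenvalue difference" matrix: `X ↦ AX - XA` in coordinates. -/
noncomputable def diffMatAux {n : ℕ} (A : Matrix (Fin n) (Fin n) ℤ) :
    Matrix (Fin n × Fin n) (Fin n × Fin n) ℤ :=
  fun p q => (if p.2 = q.2 then A p.1 q.1 else 0) - (if p.1 = q.1 then A q.2 p.2 else 0)

private lemma diff_in_spec_aux {n : ℕ} (A : Matrix (Fin n) (Fin n) ℤ) (lam mu : ℂ)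
    (hl : lam ∈ spectrum ℂ (A.map (Int.cast : ℤ → ℂ)))
    (hm : mu ∈ spectrum ℂ (A.map (Int.cast : ℤ → ℂ))) :
    lam - mu ∈ spectrum ℂ ((diffMatAux A).map (Int.cast : ℤ → ℂ)) := by
  obtain ⟨v, hv, hAv⟩ := (spec_iff_eig_aux _ _).mp hl
  obtain ⟨w, hw, hAw⟩ := (spec_iff_eig_aux _ _).mp (spec_transpose_aux _ _ hm)
  rw [spec_iff_eig_aux]
  refine ⟨fun p => v p.1 * w p.2, ?_, ?_⟩
  · rcases Function.ne_iff.mp hv with ⟨i, hi⟩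
    rcases Function.ne_iff.mp hw with ⟨j, hj⟩
    intro h
    exact mul_ne_zero hi hj (congrFun h (i, j))
  · funext p
    obtain ⟨i, j⟩ := p
    have hv' : ∑ k, (A i k : ℂ) * v k = lam * v i := congrFun hAv i
    have hw' : ∑ l, (A l j : ℂ) * w l = mu * w j := by
      have := congrFun hAw j
      simpa [Matrix.mulVec, dotProduct, Matrix.transpose_apply, Matrix.map_apply] using this
    simp only [Matrix.mulVec, dotProduct, Matrix.map_apply, diffMatAux, Pi.smul_apply,
      smul_eq_mul, Fintype.sum_prod_type]
    push_cast
    have e1 : ∑ k, (A i k : ℂ) * (v k * w j) = (∑ k, (A i k : ℂ) * v k) * w j := by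
      rw [Finset.sum_mul]; exact Finset.sum_congr rfl fun k _ => (mul_assoc _ _ _).symm
    have e2 : ∑ l, (A l j : ℂ) * (v i * w l) = v i * ∑ l, (A l j : ℂ) * w l := by
      rw [Finset.mul_sum]; exact Finset.sum_congr rfl fun l _ => by ring
    simp only [sub_mul, ite_mul, zero_mul, Finset.sum_sub_distrib, Finset.sum_ite_irrel,
      Finset.sum_const_zero, Finset.sum_ite_eq, Finset.mem_univ, if_true]
    rw [e1, e2, hv', hw']
    ring

/-- For an integer matrix `A` with entries of absolute value at most `2^a` (bit length `a`)
and at least two distinct complex eigenvalues, the minimum gap between distinct eigenvalues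
satisfies `mindgap(A) ≥ 2^{-C a n² (log₂(na+2))^k}` for universal constants `C > 0`, `k ≥ 1`. -/
theorem mindgap_lower_bound_integer_matrices :
    ∃ (C : ℝ) (k : ℕ), 0 < C ∧ 1 ≤ k ∧
      ∀ (n a : ℕ), 2 ≤ n → 1 ≤ a →
        ∀ A : Matrix (Fin n) (Fin n) ℤ,
          (∀ i j, |A i j| ≤ 2 ^ a) →
          (∃ lam mu : ℂ, lam ∈ spectrum ℂ (A.map (Int.cast : ℤ → ℂ)) ∧
            mu ∈ spectrum ℂ (A.map (Int.cast : ℤ → ℂ)) ∧ lam ≠ mu) →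
          ∀ lam mu : ℂ, lam ∈ spectrum ℂ (A.map (Int.cast : ℤ → ℂ)) →
            mu ∈ spectrum ℂ (A.map (Int.cast : ℤ → ℂ)) → lam ≠ mu →
            (2 : ℝ) ^ (-(C * a * n ^ 2 * (Real.logb 2 (n * a + 2)) ^ k)) ≤ ‖lam - mu‖ := by
  refine ⟨4, 1, by norm_num, le_refl 1, ?_⟩
  intro n a hn ha A hA _hex lam mu hlam hmu hne
  set B := diffMatAux A with hB
  set x := lam - mu with hx
  have hx0 : x ≠ 0 := sub_ne_zero_of_ne hne
  have hxspec : x ∈ spectrum ℂ (B.map (Int.cast : ℤ → ℂ)) := diff_in_spec_aux A lam mu hlam hmu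
  -- entry bound for B
  have hBent : ∀ p q, ‖(B.map (Int.cast : ℤ → ℂ)) p q‖ ≤ (2 : ℝ) ^ (a + 1) := by
    intro p q
    have h1 : |B p q| ≤ 2 ^ (a + 1) := by
      have h2 : |B p q| ≤ |if p.2 = q.2 then A p.1 q.1 else 0|
          + |if p.1 = q.1 then A q.2 p.2 else 0| := abs_sub _ _
      have h3 : |if p.2 = q.2 then A p.1 q.1 else 0| ≤ 2 ^ a := by
        split <;> simp [hA _ _, pow_pos]
      have h4 : |if p.1 = q.1 then A q.2 p.2 else 0| ≤ 2 ^ a := by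
        split <;> simp [hA _ _, pow_pos]
      calc |B p q| ≤ 2 ^ a + 2 ^ a := by omega
        _ = 2 ^ (a + 1) := by ring
    rw [Matrix.map_apply, Complex.norm_intCast]
    calc |((B p q : ℤ) : ℝ)| = ((|B p q| : ℤ) : ℝ) := by rw [Int.cast_abs]
      _ ≤ ((2 ^ (a + 1) : ℤ) : ℝ) := by exact_mod_cast h1
      _ = (2 : ℝ) ^ (a + 1) := by push_cast; ring
  -- spectrum bound for B
  set N : ℕ := n ^ 2 with hN
  have hcard : Fintype.card (Fin n × Fin n) = N := by
    simp [Fintype.card_prod, hN, sq]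
  set R : ℝ := N * 2 ^ (a + 1) with hR
  have hR1 : (1 : ℝ) ≤ R := by
    rw [hR]
    have hN1 : 1 ≤ N := by rw [hN]; nlinarith
    have h1 : (1 : ℝ) ≤ (N : ℝ) := by exact_mod_cast hN1
    nlinarith [one_le_pow₀ (show (1:ℝ) ≤ 2 by norm_num) (n := a + 1)]
  have hspecR : ∀ z : ℂ, z ∈ spectrum ℂ (B.map (Int.cast : ℤ → ℂ)) → ‖z‖ ≤ R := by
    intro z hz
    have := eig_bound_aux (B.map (Int.cast : ℤ → ℂ)) z ((2:ℝ) ^ (a + 1)) hBent hz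
    rwa [hcard] at this
  have hkey : 1 ≤ ‖x‖ * R ^ (N - 1) := by
    have := nonzero_eig_lb_aux B x R hR1 hspecR hxspec hx0
    rwa [hcard] at this
  -- arithmetic
  have hRpow_pos : (0:ℝ) < R ^ (N - 1) := pow_pos (lt_of_lt_of_le one_pos hR1) _
  have hxlb : (R ^ (N - 1))⁻¹ ≤ ‖x‖ := by
    rw [inv_le_iff_one_le_mul₀ hRpow_pos]
    linarith
  -- (n*a+2 : ℝ)
  set M : ℝ := (n : ℝ) * a + 2 with hM
  have hM2 : (2:ℝ) ≤ M := by
    have h1 : (0:ℝ) ≤ (n:ℝ) * a := by positivity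
    linarith
  have hMpos : (0:ℝ) < M := by linarith
  -- R^(N-1) ≤ M^(4*a*N)
  have hstep : R ^ (N - 1) ≤ M ^ (4 * a * N) := by
    have hnat : (n^2) * 2 ^ (a + 1) ≤ (n * a + 2) ^ (4 * a) := by
      calc (n^2) * 2 ^ (a + 1) ≤ (n * a + 2) ^ 2 * (n * a + 2) ^ (a + 1) := by
            apply Nat.mul_le_mul
            · apply Nat.pow_le_pow_left; nlinarith
            · apply Nat.pow_le_pow_left; omega
        _ = (n * a + 2) ^ (a + 3) := by rw [← pow_add]; ring_nf
        _ ≤ (n * a + 2) ^ (4 * a) := Nat.pow_le_pow_right (by omega) (by omega)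
    have hRM : R ≤ M ^ (4 * a) := by
      have hcast : ((n^2 * 2^(a+1) : ℕ) : ℝ) ≤ (((n * a + 2)^(4 * a) : ℕ) : ℝ) :=
        Nat.cast_le.mpr hnat
      push_cast at hcast
      rw [hR, hM, hN]
      push_cast
      linarith
    calc R ^ (N - 1) ≤ (M ^ (4 * a)) ^ (N - 1) :=
          pow_le_pow_left₀ (le_trans zero_le_one hR1) hRM _
      _ = M ^ (4 * a * (N - 1)) := by rw [← pow_mul]
      _ ≤ M ^ (4 * a * N) := pow_le_pow_right₀ (by linarith)
          (Nat.mul_le_mul_left _ (Nat.sub_le N 1))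
  -- identify LHS with M^{-(4*a*N)}
  have hlhs : (2 : ℝ) ^ (-((4:ℝ) * a * n ^ 2 * (Real.logb 2 M) ^ 1)) = (M ^ (4 * a * N))⁻¹ := by
    have hb : (2:ℝ) ^ (Real.logb 2 M) = M :=
      Real.rpow_logb (by norm_num) (by norm_num) hMpos
    rw [pow_one]
    rw [show -((4:ℝ) * a * n ^ 2 * Real.logb 2 M) = Real.logb 2 M * (-((4 * a * N : ℕ) : ℝ)) by
      push_cast [hN]; ring]
    rw [Real.rpow_mul (by norm_num), hb, Real.rpow_neg (le_of_lt hMpos), Real.rpow_natCast]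
  have hfinal : (2 : ℝ) ^ (-((4:ℝ) * a * n ^ 2 * (Real.logb 2 M) ^ 1)) ≤ ‖x‖ := by
    rw [hlhs]
    refine le_trans ?_ hxlb
    apply inv_anti₀ hRpow_pos hstep
  have hMeq : ((n : ℝ) * a + 2) = M := rfl
  simpa [hMeq] using hfinal
end

section
/- (Bauer–Fike theorem.) Let A ∈ ℂ^{n×n} be diagonalizable, with A = V D V^{-1} for an invertible V and diagonal D. Then for every E ∈ ℂ^{n×n}, every eigenvalue μ of A + E satisfies min_{λ ∈ spec(A)} |μ − λ| ≤ ‖V‖·‖V^{-1}‖·‖E‖. In particular, every eigenvalue of A + E lies within distance κ_V(A)·‖E‖ of the spectrum of A. -/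
open scoped Matrix.Norms.L2Operator

/-- Spectral norm bound for diagonal matrices. -/
lemma diagonal_l2_opNorm_le {n : ℕ} (v : Fin n → ℂ) (c : ℝ) (hc : 0 ≤ c)
    (h : ∀ i, ‖v i‖ ≤ c) : ‖(Matrix.diagonal v : Matrix (Fin n) (Fin n) ℂ)‖ ≤ c := by
  rw [Matrix.l2_opNorm_def]
  apply ContinuousLinearMap.opNorm_le_bound _ hc
  intro x
  simp only [LinearMap.coe_toContinuousLinearMap', LinearEquiv.trans_apply]
  rw [Matrix.toEuclideanLin_apply]
  rw [EuclideanSpace.norm_eq, EuclideanSpace.norm_eq]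
  rw [← Real.sqrt_sq hc, ← Real.sqrt_mul (by positivity)]
  apply Real.sqrt_le_sqrt
  rw [Finset.mul_sum]
  apply Finset.sum_le_sum
  intro i _
  simp only [Matrix.mulVec_diagonal, norm_mul, mul_pow]
  have hx : (WithLp.equiv 2 (Fin n → ℂ)) x i = x i := rfl
  have h1 : ‖v i‖ ^ 2 ≤ c ^ 2 := by
    apply sq_le_sq' _ (h i); linarith [norm_nonneg (v i), h i]
  nlinarith [sq_nonneg (‖x i‖)]

/-- Bauer–Fike theorem: if `A = V D V⁻¹` with `V` invertible and `D` diagonal, then every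
eigenvalue `μ` of `A + E` lies within distance `‖V‖‖V⁻¹‖‖E‖` of the spectrum of `A`
(norms are spectral norms). -/
theorem bauer_fike {n : ℕ} (A V D : Matrix (Fin n) (Fin n) ℂ)
    (hV : IsUnit V) (hD : D.IsDiag) (hA : A = V * D * V⁻¹)
    (E : Matrix (Fin n) (Fin n) ℂ) (μ : ℂ) (hμ : μ ∈ spectrum ℂ (A + E)) :
    ∃ lam ∈ spectrum ℂ A, ‖μ - lam‖ ≤ ‖V‖ * ‖V⁻¹‖ * ‖E‖ := by
  rcases Nat.eq_zero_or_pos n with hn | hn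
  · subst hn
    haveI : Subsingleton (Matrix (Fin 0) (Fin 0) ℂ) :=
      ⟨fun a b => by ext i; exact i.elim0⟩
    exact absurd (isUnit_of_subsingleton _) (spectrum.mem_iff.mp hμ)
  haveI : Nonempty (Fin n) := ⟨⟨0, hn⟩⟩
  obtain ⟨u, hu⟩ := hV
  have huinv : (↑u⁻¹ : Matrix (Fin n) (Fin n) ℂ) = V⁻¹ := by
    rw [Matrix.coe_units_inv, hu]
  set d : Fin n → ℂ := fun i => D i i with hd
  have hDdiag : D = Matrix.diagonal d := (hD.diagonal_diag).symm
  have hspec : spectrum ℂ A = Set.range d := by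
    rw [hA, hDdiag, ← huinv, ← hu, spectrum.units_conjugate, spectrum_diagonal]
  set c := ‖V‖ * ‖V⁻¹‖ * ‖E‖ with hc
  have hc0 : 0 ≤ c := by positivity
  by_contra hcon
  push_neg at hcon
  have hlt : ∀ i, c < ‖μ - d i‖ := fun i => hcon (d i) (hspec ▸ Set.mem_range_self i)
  have hne : ∀ i, μ - d i ≠ 0 := by
    intro i h0
    have := hlt i
    rw [h0, norm_zero] at this
    linarith
  -- E ≠ 0, hence c > 0
  have hcpos : 0 < c := by
    rcases eq_or_ne E 0 with hE | hE
    · exfalso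
      rw [hE, add_zero] at hμ
      have := hcon μ hμ
      simp only [sub_self, norm_zero] at this
      linarith
    · have hV0 : V ≠ 0 := by
        rintro rfl
        have h1 : (1 : Matrix (Fin n) (Fin n) ℂ) = 0 := by
          rw [← u.inv_mul, hu, mul_zero]
        exact one_ne_zero h1
      have hVi0 : V⁻¹ ≠ 0 := by
        rintro h0
        have h1 : (1 : Matrix (Fin n) (Fin n) ℂ) = 0 := by
          rw [← u.mul_inv, huinv, h0, mul_zero]
        exact one_ne_zero h1
      have := norm_pos_iff.mpr hV0
      have := norm_pos_iff.mpr hVi0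
      have := norm_pos_iff.mpr hE
      positivity
  -- diagonal inverse unit
  set B : Matrix (Fin n) (Fin n) ℂ := Matrix.diagonal (fun i => (μ - d i)⁻¹) with hB
  have hmul1 : Matrix.diagonal (fun i => μ - d i) * B = 1 := by
    rw [hB, Matrix.diagonal_mul_diagonal,
      show (fun i => (μ - d i) * (μ - d i)⁻¹) = fun _ : Fin n => (1 : ℂ) from
        funext fun i => mul_inv_cancel₀ (hne i), Matrix.diagonal_one]
  have hmul2 : B * Matrix.diagonal (fun i => μ - d i) = 1 := by
    rw [hB, Matrix.diagonal_mul_diagonal,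
      show (fun i => (μ - d i)⁻¹ * (μ - d i)) = fun _ : Fin n => (1 : ℂ) from
        funext fun i => inv_mul_cancel₀ (hne i), Matrix.diagonal_one]
  set w : (Matrix (Fin n) (Fin n) ℂ)ˣ := ⟨Matrix.diagonal (fun i => μ - d i), B, hmul1, hmul2⟩
  set U : (Matrix (Fin n) (Fin n) ℂ)ˣ := u * w * u⁻¹ with hU
  -- μ•1 - A is a unit
  have hμA : algebraMap ℂ (Matrix (Fin n) (Fin n) ℂ) μ - A
      = (U : Matrix (Fin n) (Fin n) ℂ) := by
    rw [hA, hDdiag, ← huinv, ← hu, hU, Units.val_mul, Units.val_mul]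
    have hcomm : algebraMap ℂ (Matrix (Fin n) (Fin n) ℂ) μ
        = (u : Matrix (Fin n) (Fin n) ℂ) * (algebraMap ℂ (Matrix (Fin n) (Fin n) ℂ) μ)
          * ((u⁻¹ : (Matrix (Fin n) (Fin n) ℂ)ˣ) : Matrix (Fin n) (Fin n) ℂ) := by
      conv_rhs => rw [← Algebra.commutes, mul_assoc, Units.mul_inv, mul_one]
    rw [hcomm]
    have hw : (↑w : Matrix (Fin n) (Fin n) ℂ)
        = algebraMap ℂ (Matrix (Fin n) (Fin n) ℂ) μ - Matrix.diagonal d := by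
      show Matrix.diagonal (fun i => μ - d i) = _
      rw [Matrix.algebraMap_eq_diagonal, Matrix.diagonal_sub]
      rfl
    rw [hw, mul_sub, sub_mul]
  -- norm bound on the perturbation
  have hBle : ‖B‖ * c < 1 := by
    obtain ⟨i0, _, hi0⟩ := Finset.exists_max_image Finset.univ
      (fun i => ‖(μ - d i)⁻¹‖) ⟨Classical.arbitrary (Fin n), Finset.mem_univ _⟩
    have hBnorm : ‖B‖ ≤ ‖(μ - d i0)⁻¹‖ :=
      diagonal_l2_opNorm_le _ _ (norm_nonneg _) (fun i => hi0 i (Finset.mem_univ i))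
    have h1 : ‖(μ - d i0)⁻¹‖ < c⁻¹ := by
      rw [norm_inv]
      exact inv_strictAnti₀ hcpos (hlt i0)
    calc ‖B‖ * c ≤ ‖(μ - d i0)⁻¹‖ * c :=
          mul_le_mul_of_nonneg_right hBnorm (le_of_lt hcpos)
      _ < c⁻¹ * c := mul_lt_mul_of_pos_right h1 hcpos
      _ = 1 := inv_mul_cancel₀ (ne_of_gt hcpos)
  set t : Matrix (Fin n) (Fin n) ℂ := ((U⁻¹ : (Matrix (Fin n) (Fin n) ℂ)ˣ)
    : Matrix (Fin n) (Fin n) ℂ) * E with ht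
  have hUinv : ((U⁻¹ : (Matrix (Fin n) (Fin n) ℂ)ˣ) : Matrix (Fin n) (Fin n) ℂ)
      = V * B * V⁻¹ := by
    have h2 : U⁻¹ = u * w⁻¹ * u⁻¹ := by
      rw [hU, mul_inv_rev, mul_inv_rev, inv_inv, ← mul_assoc]
    rw [h2, Units.val_mul, Units.val_mul, hu, huinv]
    rfl
  have htlt : ‖t‖ < 1 := by
    calc ‖t‖ = ‖V * B * V⁻¹ * E‖ := by rw [ht, hUinv]
      _ ≤ ‖V * B * V⁻¹‖ * ‖E‖ := norm_mul_le _ _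
      _ ≤ ‖V * B‖ * ‖V⁻¹‖ * ‖E‖ :=
          mul_le_mul_of_nonneg_right (norm_mul_le _ _) (norm_nonneg _)
      _ ≤ ‖V‖ * ‖B‖ * ‖V⁻¹‖ * ‖E‖ :=
          mul_le_mul_of_nonneg_right
            (mul_le_mul_of_nonneg_right (norm_mul_le V B) (norm_nonneg _)) (norm_nonneg _)
      _ = ‖B‖ * c := by rw [hc]; ring
      _ < 1 := hBle
  have hone : IsUnit ((1 : Matrix (Fin n) (Fin n) ℂ) - t) := (Units.oneSub t htlt).isUnit
  have hfinal : IsUnit (algebraMap ℂ (Matrix (Fin n) (Fin n) ℂ) μ - (A + E)) := by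
    have key : algebraMap ℂ (Matrix (Fin n) (Fin n) ℂ) μ - (A + E)
        = (U : Matrix (Fin n) (Fin n) ℂ) * (1 - t) := by
      rw [mul_sub, mul_one, ht, ← mul_assoc,
        show ((U : Matrix (Fin n) (Fin n) ℂ) * ((U⁻¹ : (Matrix (Fin n) (Fin n) ℂ)ˣ)
          : Matrix (Fin n) (Fin n) ℂ)) = 1 from U.mul_inv, one_mul, ← hμA]
      exact (sub_sub _ _ _).symm
    rw [key]
    exact U.isUnit.mul hone
  exact (spectrum.mem_iff.mp hμ) hfinal
end

section
/- Let z₀ ∈ ℂ with Re z₀ > 0, and define the sequence z_{k+1} = (z_k + z_k^{-1})/2. Then for every k: (i) Re z_k > 0 (in particular z_k ≠ 0, so the sequence is well defined); (ii) (z_k − 1)/(z_k + 1) = ((z₀ − 1)/(z₀ + 1))^{2^k}; and (iii) z_k → 1 as k → ∞. Symmetrically, if Re z₀ < 0 then z_k → −1. -/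
open Filter Topology

lemma cayley_step (w : ℂ) (hw : w ≠ 0) (h1 : w + 1 ≠ 0) :
    ((w + w⁻¹) / 2 - 1) / ((w + w⁻¹) / 2 + 1) = ((w - 1) / (w + 1)) ^ 2 := by
  have h2w : (2 : ℂ) * w ≠ 0 := by simp [hw]
  have hnum : (w + w⁻¹) / 2 - 1 = (w - 1) ^ 2 / (2 * w) := by field_simp; ring
  have hden : (w + w⁻¹) / 2 + 1 = (w + 1) ^ 2 / (2 * w) := by field_simp; ring
  rw [hnum, hden, div_pow, div_div_div_cancel_right₀]
  exact h2w

lemma sign_pos_case (z : ℕ → ℂ)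
    (hrec : ∀ k, z (k + 1) = (z k + (z k)⁻¹) / 2) (h0 : 0 < (z 0).re) :
    (∀ k, 0 < (z k).re) ∧
    (∀ k, (z k - 1) / (z k + 1) = ((z 0 - 1) / (z 0 + 1)) ^ (2 ^ k)) ∧
    Tendsto z atTop (𝓝 1) := by
  -- (i)
  have hpos : ∀ k, 0 < (z k).re := by
    intro k
    induction k with
    | zero => exact h0
    | succ k ih =>
      have hz : z k ≠ 0 := fun h => by simp [h] at ih
      have hnsq : 0 < Complex.normSq (z k) := Complex.normSq_pos.mpr hz
      have h2 : (2 : ℂ) = ((2 : ℝ) : ℂ) := by norm_num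
      rw [hrec, h2, Complex.div_ofReal_re, Complex.add_re, Complex.inv_re]
      positivity
  have hz_ne : ∀ k, z k ≠ 0 := fun k h => by simpa [h] using hpos k
  have hz1_ne : ∀ k, z k + 1 ≠ 0 := by
    intro k h
    have : (z k + 1).re = 0 := by rw [h]; simp
    rw [Complex.add_re] at this
    simp at this
    have := hpos k
    linarith
  -- (ii)
  have hii : ∀ k, (z k - 1) / (z k + 1) = ((z 0 - 1) / (z 0 + 1)) ^ (2 ^ k) := by
    intro k
    induction k with
    | zero => simp
    | succ k ih =>
      rw [hrec, cayley_step (z k) (hz_ne k) (hz1_ne k), ih, ← pow_mul, ← pow_succ]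
  -- (iii)
  set r : ℂ := (z 0 - 1) / (z 0 + 1) with hr_def
  have hr : ‖r‖ < 1 := by
    have habs : ‖z 0 - 1‖ < ‖z 0 + 1‖ := by
      have hsq : ‖z 0 - 1‖ ^ 2 < ‖z 0 + 1‖ ^ 2 := by
        rw [Complex.sq_norm, Complex.sq_norm, Complex.normSq_apply, Complex.normSq_apply]
        simp only [Complex.sub_re, Complex.sub_im, Complex.add_re, Complex.add_im,
          Complex.one_re, Complex.one_im]
        nlinarith [h0]
      exact lt_of_pow_lt_pow_left₀ 2 (norm_nonneg _) hsq
    rw [hr_def]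
    simp only [norm_div]
    rw [div_lt_one (norm_pos_iff.mpr (hz1_ne 0))]
    exact habs
  have ht0 : Tendsto (fun k => r ^ (2 ^ k)) atTop (𝓝 0) := by
    exact (tendsto_pow_atTop_nhds_zero_of_norm_lt_one hr).comp
      (tendsto_pow_atTop_atTop_of_one_lt one_lt_two)
  have hzform : ∀ k, z k = (1 + r ^ (2 ^ k)) / (1 - r ^ (2 ^ k)) := by
    intro k
    rw [← hii k]
    have h1 := hz1_ne k
    have hden : 1 - (z k - 1) / (z k + 1) = 2 / (z k + 1) := by field_simp; ring
    have hnum : 1 + (z k - 1) / (z k + 1) = 2 * z k / (z k + 1) := by field_simp; ring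
    rw [hnum, hden, div_div_div_cancel_right₀]
    · rw [mul_comm, mul_div_assoc]; simp
    · exact h1
  refine ⟨hpos, hii, ?_⟩
  have : Tendsto (fun k => (1 + r ^ (2 ^ k)) / (1 - r ^ (2 ^ k))) atTop
      (𝓝 ((1 + 0) / (1 - 0))) := by
    exact Tendsto.div (tendsto_const_nhds.add ht0) (tendsto_const_nhds.sub ht0) (by norm_num)
  simp only [add_zero, sub_zero, div_one] at this
  exact this.congr (fun k => (hzform k).symm)

/-- Scalar Newton iteration for the sign function: for `z_{k+1} = (z_k + z_k⁻¹)/2`,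
if `Re z₀ > 0` then (i) `Re z_k > 0` for all `k`, (ii)
`(z_k - 1)/(z_k + 1) = ((z₀ - 1)/(z₀ + 1))^{2^k}`, and (iii) `z_k → 1`;
symmetrically, if `Re z₀ < 0` then `z_k → -1`. -/
theorem sign_function_scalar_iteration (z : ℕ → ℂ)
    (hrec : ∀ k, z (k + 1) = (z k + (z k)⁻¹) / 2) :
    (0 < (z 0).re →
      (∀ k, 0 < (z k).re) ∧
      (∀ k, (z k - 1) / (z k + 1) = ((z 0 - 1) / (z 0 + 1)) ^ (2 ^ k)) ∧
      Tendsto z atTop (𝓝 1)) ∧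
    ((z 0).re < 0 → Tendsto z atTop (𝓝 (-1))) := by
  constructor
  · exact sign_pos_case z hrec
  · intro h0
    set w : ℕ → ℂ := fun k => -z k with hw
    have wrec : ∀ k, w (k + 1) = (w k + (w k)⁻¹) / 2 := by
      intro k
      simp only [hw, hrec k, inv_neg]
      ring
    have hw0 : 0 < (w 0).re := by simp [hw]; linarith
    have := (sign_pos_case w wrec hw0).2.2
    have hneg : Tendsto (fun k => -(w k)) atTop (𝓝 (-1)) := this.neg
    exact hneg.congr (fun k => by simp [hw])
end

section
/- Let n ≥ 2 and let S_n be the n×n matrix with (S_n)_{i+1,i} = 1/4, (S_n)_{i,i+1} = 1 for 1 ≤ i ≤ n−1, and all other entries zero. Then S_n is diagonalizable and its eigenvector condition number satisfies κ_V(S_n) ≥ 2^n / (n+1)³; in particular κ_V(S_n) grows exponentially in n. -/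
open scoped Matrix.Norms.L2Operator
open Matrix
set_option maxHeartbeats 1600000

lemma aux_entry_le_norm {m n : ℕ} (A : Matrix (Fin m) (Fin n) ℂ) (i : Fin m) (j : Fin n) :
    ‖A i j‖ ≤ ‖A‖ := by
  have h := A.l2_opNorm_mulVec (EuclideanSpace.single j (1 : ℂ))
  rw [EuclideanSpace.norm_single, norm_one, mul_one] at h
  refine le_trans ?_ h
  set z := (EuclideanSpace.equiv (Fin m) ℂ).symm (A *ᵥ (EuclideanSpace.single j (1:ℂ))) with hzdef
  have hz : z i = A i j := by
    show (A *ᵥ (EuclideanSpace.single j (1:ℂ))) i = A i j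
    have he : ((EuclideanSpace.single j (1:ℂ)) : Fin n → ℂ) = Pi.single j 1 := by
      funext l; rw [EuclideanSpace.single_apply, Pi.single_apply]
    rw [he, Matrix.mulVec_single]
    simp
  have hb := norm_inner_le_norm (𝕜 := ℂ) (EuclideanSpace.single i (1:ℂ)) z
  rw [EuclideanSpace.norm_single, norm_one, one_mul] at hb
  rw [← hz]
  refine le_trans (le_of_eq ?_) hb
  rw [EuclideanSpace.inner_single_left]
  simp

lemma aux_sum_ite {n : ℕ} (m : ℕ) (g : Fin n → ℂ) :
    (∑ i : Fin n, if (i : ℕ) = m then g i else 0) = if h : m < n then g ⟨m, h⟩ else 0 := by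
  split_ifs with h
  · rw [Finset.sum_eq_single_of_mem (⟨m, h⟩ : Fin n) (Finset.mem_univ _)]
    · simp
    · intro i _ hne
      exact if_neg fun hc => hne (Fin.ext hc)
  · refine Finset.sum_eq_zero fun i _ => if_neg ?_
    intro hc
    exact h (hc ▸ i.isLt)

lemma aux_tri_mulVec {n : ℕ} (M : Matrix (Fin n) (Fin n) ℂ) (a b : ℂ)
    (hM : ∀ i j, M i j = if (j:ℕ) = (i:ℕ)+1 then a else if (i:ℕ) = (j:ℕ)+1 then b else 0)
    (f : Fin n → ℂ) (j : Fin n) :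
    (M *ᵥ f) j = (if h : (j:ℕ)+1 < n then a * f ⟨(j:ℕ)+1, h⟩ else 0)
      + (if 0 < (j:ℕ) then b * f ⟨(j:ℕ)-1, Nat.lt_of_le_of_lt (Nat.sub_le _ _) j.isLt⟩ else 0) := by
  have key : ∀ i : Fin n, M j i * f i
      = (if (i:ℕ) = (j:ℕ)+1 then a * f i else 0)
        + (if ((i:ℕ) = (j:ℕ)-1 ∧ 0 < (j:ℕ)) then b * f i else 0) := by
    intro i
    rw [hM]
    by_cases h1 : (i:ℕ) = (j:ℕ)+1
    · have h3 : ¬ ((i:ℕ) = (j:ℕ)-1 ∧ 0 < (j:ℕ)) := by omega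
      rw [if_pos h1, if_pos h1, if_neg h3, add_zero]
    · by_cases h2 : (j:ℕ) = (i:ℕ)+1
      · have h3 : ((i:ℕ) = (j:ℕ)-1 ∧ 0 < (j:ℕ)) := by omega
        rw [if_neg h1, if_pos h2, if_neg h1, if_pos h3, zero_add]
      · have h3 : ¬ ((i:ℕ) = (j:ℕ)-1 ∧ 0 < (j:ℕ)) := by omega
        rw [if_neg h1, if_neg h2, if_neg h1, if_neg h3, zero_mul, add_zero]
  have hmv : (M *ᵥ f) j = ∑ i : Fin n, M j i * f i := rfl
  rw [hmv, Finset.sum_congr rfl fun i _ => key i, Finset.sum_add_distrib,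
    aux_sum_ite ((j:ℕ)+1) (fun i => a * f i)]
  congr 1
  by_cases hj : 0 < (j:ℕ)
  · rw [if_pos hj]
    have : ∀ i : Fin n, (if ((i:ℕ) = (j:ℕ)-1 ∧ 0 < (j:ℕ)) then b * f i else 0)
        = (if (i:ℕ) = (j:ℕ)-1 then b * f i else 0) := by
      intro i; simp [hj]
    rw [Finset.sum_congr rfl fun i _ => this i, aux_sum_ite ((j:ℕ)-1) (fun i => b * f i),
      dif_pos (Nat.lt_of_le_of_lt (Nat.sub_le _ _) j.isLt)]
  · rw [if_neg hj]
    refine Finset.sum_eq_zero fun i _ => if_neg ?_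
    tauto

noncomputable def thA (n k : ℕ) : ℝ := ((k:ℝ)+1) * Real.pi / ((n:ℝ)+1)

noncomputable def pA (n : ℕ) (r : ℂ) (k : Fin n) : Fin n → ℂ :=
  fun j => r ^ (j:ℕ) * (Real.sin ((((j:ℕ):ℝ)+1) * thA n (k:ℕ)) : ℂ)

lemma aux_eigen {n : ℕ} (hn : 2 ≤ n) (M : Matrix (Fin n) (Fin n) ℂ) (a b : ℂ)
    (hM : ∀ i j, M i j = if (j:ℕ) = (i:ℕ)+1 then a else if (i:ℕ) = (j:ℕ)+1 then b else 0)
    (r : ℂ) (ha : 2 * a * r = 1) (hb : 2 * b = r) (k : Fin n) :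
    M *ᵥ pA n r k = (Real.cos (thA n (k:ℕ)) : ℂ) • pA n r k := by
  set θ := thA n (k:ℕ) with hθdef
  have htrig : ∀ m : ℕ, Real.sin (((m:ℝ)+1+1) * θ) + Real.sin ((m:ℝ) * θ)
      = 2 * Real.cos θ * Real.sin (((m:ℝ)+1) * θ) := by
    intro m
    have h1 : ((m:ℝ)+1+1) * θ = ((m:ℝ)+1) * θ + θ := by ring
    have h2 : (m:ℝ) * θ = ((m:ℝ)+1) * θ - θ := by ring
    rw [h1, h2, Real.sin_add, Real.sin_sub]; ring
  have hsn : Real.sin (((n:ℝ)+1) * θ) = 0 := by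
    have harg : ((n:ℝ)+1) * θ = (((k:ℕ)+1 : ℕ) : ℝ) * Real.pi := by
      rw [hθdef]; unfold thA
      have hne : ((n:ℝ)+1) ≠ 0 := by positivity
      push_cast
      field_simp
    rw [harg, Real.sin_nat_mul_pi]
  funext j
  rw [aux_tri_mulVec M a b hM]
  by_cases hj0 : 0 < (j:ℕ)
  · have hc2 : ((((j:ℕ)-1 : ℕ)):ℝ) + 1 = ((j:ℕ):ℝ) := by
      have h1 : (1:ℕ) ≤ (j:ℕ) := hj0
      push_cast [Nat.cast_sub h1]; ring
    have hp2 : r ^ ((j:ℕ)-1) * r = r ^ (j:ℕ) := by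
      rw [← pow_succ]; congr 1; omega
    by_cases hj1 : (j:ℕ)+1 < n
    · rw [dif_pos hj1, if_pos hj0]
      simp only [pA, Pi.smul_apply, smul_eq_mul]
      have hc1 : ((((j:ℕ)+1 : ℕ)):ℝ) + 1 = ((j:ℕ):ℝ)+1+1 := by push_cast; ring
      rw [hc1, hc2]
      have keyR : Real.sin ((((j:ℕ):ℝ)+1+1) * θ)
          = 2 * Real.cos θ * Real.sin ((((j:ℕ):ℝ)+1) * θ) - Real.sin (((j:ℕ):ℝ) * θ) := by
        linarith [htrig (j:ℕ)]
      have keyC : (Real.sin ((((j:ℕ):ℝ)+1+1) * θ) : ℂ)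
          = 2 * (Real.cos θ : ℂ) * (Real.sin ((((j:ℕ):ℝ)+1) * θ) : ℂ)
            - (Real.sin (((j:ℕ):ℝ) * θ) : ℂ) := by
        exact_mod_cast congrArg Complex.ofReal keyR
      rw [keyC]
      have hp1 : r ^ ((j:ℕ)+1) = r ^ (j:ℕ) * r := pow_succ r (j:ℕ)
      set s1 : ℂ := (Real.sin ((((j:ℕ):ℝ)+1) * θ) : ℂ)
      set s0 : ℂ := (Real.sin (((j:ℕ):ℝ) * θ) : ℂ)
      set c : ℂ := (Real.cos θ : ℂ)
      linear_combination (2*a*c*s1 - a*s0) * hp1 + (c*(r^(j:ℕ))*s1 - s0*(r^(j:ℕ))/2) * ha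
        + ((r^((j:ℕ)-1))*s0/2) * hb + (s0/2) * hp2
    · rw [dif_neg hj1, if_pos hj0, zero_add]
      simp only [pA, Pi.smul_apply, smul_eq_mul]
      rw [hc2]
      have harg : (((j:ℕ):ℝ)+1+1) = ((n:ℝ)+1) := by
        have h2 : (j:ℕ)+2 = n+1 := by have := j.isLt; omega
        have := congrArg (fun t : ℕ => (t:ℝ)) h2
        push_cast at this
        linarith
      have keyR : Real.sin (((j:ℕ):ℝ) * θ) = 2 * Real.cos θ * Real.sin ((((j:ℕ):ℝ)+1) * θ) := by
        have h := htrig (j:ℕ)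
        rw [harg, hsn] at h
        linarith
      have keyC : (Real.sin (((j:ℕ):ℝ) * θ) : ℂ)
          = 2 * (Real.cos θ : ℂ) * (Real.sin ((((j:ℕ):ℝ)+1) * θ) : ℂ) := by
        exact_mod_cast congrArg Complex.ofReal keyR
      rw [keyC]
      set s1 : ℂ := (Real.sin ((((j:ℕ):ℝ)+1) * θ) : ℂ)
      set c : ℂ := (Real.cos θ : ℂ)
      linear_combination (c*s1*(r^((j:ℕ)-1))) * hb + (c*s1) * hp2
  · have hj1 : (j:ℕ)+1 < n := by have := j.isLt; omega
    have hj0' : (j:ℕ) = 0 := by omega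
    rw [dif_pos hj1, if_neg hj0, add_zero]
    simp only [pA, Pi.smul_apply, smul_eq_mul, hj0']
    simp only [zero_add, pow_one, pow_zero, one_mul, Nat.cast_one, Nat.cast_zero]
    have keyR : Real.sin ((1+1) * θ) = 2 * Real.cos θ * Real.sin θ := by
      have h := htrig 0
      rw [Nat.cast_zero, zero_mul, Real.sin_zero, add_zero, zero_add, one_mul] at h
      exact h
    have keyC : (Real.sin ((1+1) * θ) : ℂ) = 2 * (Real.cos θ : ℂ) * (Real.sin θ : ℂ) := by
      exact_mod_cast congrArg Complex.ofReal keyR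
    rw [keyC]
    set s1 : ℂ := (Real.sin θ : ℂ)
    set c : ℂ := (Real.cos θ : ℂ)
    linear_combination (c*s1) * ha

lemma aux_basis {n : ℕ} (M : Matrix (Fin n) (Fin n) ℂ) (μ : Fin n → ℂ) (p : Fin n → Fin n → ℂ)
    (hμ : Function.Injective μ) (hp : ∀ k, M *ᵥ p k = μ k • p k) (hp0 : ∀ k, p k ≠ 0) :
    IsUnit (Matrix.of fun j k => p k j) ∧
      M * (Matrix.of fun j k => p k j) = (Matrix.of fun j k => p k j) * Matrix.diagonal μ ∧
      (∀ (k₀ : Fin n) (v : Fin n → ℂ), M *ᵥ v = μ k₀ • v → ∃ a : ℂ, v = a • p k₀) := by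
  set W : Matrix (Fin n) (Fin n) ℂ := Matrix.of fun j k => p k j with hWdef
  have hWc : ∀ c : Fin n → ℂ, W *ᵥ c = ∑ k, c k • p k := by
    intro c; funext j
    rw [Finset.sum_apply]
    show ∑ k, W j k * c k = ∑ k, (c k • p k) j
    refine Finset.sum_congr rfl fun k _ => ?_
    show p k j * c k = c k * p k j
    ring
  have hli : LinearIndependent ℂ p := by
    apply Module.End.eigenvectors_linearIndependent' (Matrix.mulVecLin M) μ hμ
    intro k
    rw [Module.End.hasEigenvector_iff, Module.End.mem_eigenspace_iff]
    exact ⟨by rw [Matrix.mulVecLin_apply, hp k], hp0 k⟩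
  have hinj : Function.Injective W.mulVec := by
    intro c d hcd
    have h0 : W *ᵥ (c - d) = 0 := by rw [Matrix.mulVec_sub, hcd, sub_self]
    rw [hWc] at h0
    have hz := Fintype.linearIndependent_iff.mp hli (c - d) h0
    funext k
    have := hz k
    simp only [Pi.sub_apply] at this
    exact sub_eq_zero.mp this
  have hunit : IsUnit W := Matrix.mulVec_injective_iff_isUnit.mp hinj
  have hdet : IsUnit W.det := (Matrix.isUnit_iff_isUnit_det W).mp hunit
  have hMW : M * W = W * Matrix.diagonal μ := by
    ext j k
    have h1 : (M * W) j k = (M *ᵥ p k) j := by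
      rw [Matrix.mul_apply]
      rfl
    have h2 : (W * Matrix.diagonal μ) j k = p k j * μ k := by
      rw [Matrix.mul_diagonal]
      rfl
    rw [h1, h2, hp k]
    show μ k * p k j = p k j * μ k
    ring
  refine ⟨hunit, hMW, fun k₀ v hv => ?_⟩
  set c : Fin n → ℂ := W⁻¹ *ᵥ v with hcdef
  have hvW : v = W *ᵥ c := by
    rw [hcdef, Matrix.mulVec_mulVec, Matrix.mul_nonsing_inv _ hdet, Matrix.one_mulVec]
  have e1 : M *ᵥ v = ∑ k, (c k * μ k) • p k := by
    calc M *ᵥ v = M.mulVecLin (∑ k, c k • p k) := by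
          rw [Matrix.mulVecLin_apply, hvW, hWc]
      _ = ∑ k, c k • M.mulVecLin (p k) := by
          rw [map_sum]
          exact Finset.sum_congr rfl fun k _ => (M.mulVecLin).map_smul _ _
      _ = ∑ k, (c k * μ k) • p k := by
          refine Finset.sum_congr rfl fun k _ => ?_
          rw [Matrix.mulVecLin_apply, hp k, smul_smul]
  have e2 : μ k₀ • v = ∑ k, (c k * μ k₀) • p k := by
    rw [hvW, hWc, Finset.smul_sum]
    refine Finset.sum_congr rfl fun k _ => ?_
    rw [smul_smul, mul_comm]
  have e3 : ∑ k, ((c k * μ k - c k * μ k₀) • p k) = 0 := by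
    have : ∑ k, ((c k * μ k - c k * μ k₀) • p k)
        = (∑ k, (c k * μ k) • p k) - ∑ k, (c k * μ k₀) • p k := by
      rw [← Finset.sum_sub_distrib]
      exact Finset.sum_congr rfl fun k _ => by rw [sub_smul]
    rw [this, ← e1, ← e2, hv, sub_self]
  have hck : ∀ k, k ≠ k₀ → c k = 0 := by
    intro k hk
    have hz := Fintype.linearIndependent_iff.mp hli _ e3 k
    have hμne : μ k - μ k₀ ≠ 0 := sub_ne_zero.mpr fun h => hk (hμ h)
    have : c k * (μ k - μ k₀) = 0 := by linear_combination hz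
    rcases mul_eq_zero.mp this with h | h
    · exact h
    · exact absurd h hμne
  refine ⟨c k₀, ?_⟩
  rw [hvW, hWc]
  rw [Finset.sum_eq_single k₀]
  · intro k _ hk
    rw [hck k hk, zero_smul]
  · intro h
    exact absurd (Finset.mem_univ k₀) h
/-- The eigenvector condition number of a diagonalizable matrix `A`:
`κ_V(A) = inf { ‖V‖‖V⁻¹‖ : V invertible, V⁻¹ A V diagonal }`, with the spectral norm. -/
noncomputable def kappaV {n : ℕ} (A : Matrix (Fin n) (Fin n) ℂ) : ℝ :=
  sInf {x : ℝ | ∃ V : Matrix (Fin n) (Fin n) ℂ,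
    IsUnit V ∧ (V⁻¹ * A * V).IsDiag ∧ x = ‖V‖ * ‖V⁻¹‖}

/-- The tridiagonal Toeplitz matrix `S_n` (with `1/4`'s on the subdiagonal and `1`'s on
the superdiagonal) is diagonalizable and has exponentially large eigenvector condition
number: `κ_V(S_n) ≥ 2^n / (n+1)³`. -/
theorem kappaV_tridiagonal_toeplitz_lower_bound {n : ℕ} (hn : 2 ≤ n)
    (S : Matrix (Fin n) (Fin n) ℂ)
    (hS : ∀ i j, S i j =
      if (j : ℕ) = (i : ℕ) + 1 then 1
      else if (i : ℕ) = (j : ℕ) + 1 then 1 / 4 else 0) :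
    (∃ V : Matrix (Fin n) (Fin n) ℂ, IsUnit V ∧ (V⁻¹ * S * V).IsDiag) ∧
    (2 : ℝ) ^ n / (n + 1) ^ 3 ≤ kappaV S := by
  have hπ := Real.pi_pos
  have hn1 : (0:ℝ) < (n:ℝ)+1 := by positivity
  set μ : Fin n → ℂ := fun k : Fin n => (Real.cos (thA n (k:ℕ)) : ℂ) with hμdef
  have hθpos : ∀ k : Fin n, 0 < thA n (k:ℕ) := by
    intro k; unfold thA; positivity
  have hθlt : ∀ k : Fin n, thA n (k:ℕ) < Real.pi := by
    intro k; unfold thA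
    rw [div_lt_iff₀ hn1]
    have hk : ((k:ℕ):ℝ) < (n:ℝ) := by exact_mod_cast k.isLt
    nlinarith
  have hμinj : Function.Injective μ := by
    intro k k' h
    simp only [hμdef] at h
    have hcos : Real.cos (thA n (k:ℕ)) = Real.cos (thA n (k':ℕ)) := by exact_mod_cast h
    have hth : thA n (k:ℕ) = thA n (k':ℕ) :=
      Real.injOn_cos ⟨(hθpos k).le, (hθlt k).le⟩ ⟨(hθpos k').le, (hθlt k').le⟩ hcos
    unfold thA at hth
    have hpne : Real.pi ≠ 0 := ne_of_gt hπ
    have hne : ((n:ℝ)+1) ≠ 0 := ne_of_gt hn1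
    field_simp at hth
    exact Fin.ext (by exact_mod_cast (by linarith : ((k:ℕ):ℝ) = ((k':ℕ):ℝ)))
  have hsin : ∀ k : Fin n, 0 < Real.sin (thA n (k:ℕ)) :=
    fun k => Real.sin_pos_of_pos_of_lt_pi (hθpos k) (hθlt k)
  have hp0 : ∀ (r : ℂ) (k : Fin n), pA n r k ≠ 0 := by
    intro r k h
    have h0 : pA n r k ⟨0, by omega⟩ = 0 := congrFun h _
    have hval : pA n r k ⟨0, by omega⟩ = ((Real.sin (thA n (k:ℕ))):ℂ) := by
      simp only [pA]
      norm_num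
    rw [hval, Complex.ofReal_eq_zero] at h0
    exact absurd h0 (ne_of_gt (hsin k))
  have hST : ∀ i j, Sᵀ i j =
      if (j:ℕ) = (i:ℕ)+1 then (1/4 : ℂ) else if (i:ℕ) = (j:ℕ)+1 then 1 else 0 := by
    intro i j
    rw [Matrix.transpose_apply, hS j i]
    split_ifs <;> first | rfl | (exfalso; omega)
  set x : Fin n → Fin n → ℂ := pA n 2⁻¹ with hxdef
  set y : Fin n → Fin n → ℂ := pA n 2 with hydef
  have hx : ∀ k, S *ᵥ x k = μ k • x k :=
    fun k => aux_eigen hn S 1 (1/4) hS 2⁻¹ (by norm_num) (by norm_num) k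
  have hy : ∀ k, Sᵀ *ᵥ y k = μ k • y k :=
    fun k => aux_eigen hn Sᵀ (1/4) 1 hST 2 (by norm_num) (by norm_num) k
  obtain ⟨hWu, hWm, hWspan⟩ := aux_basis S μ x hμinj hx (fun k => hp0 _ k)
  obtain ⟨hYu, hYm, hYspan⟩ := aux_basis Sᵀ μ y hμinj hy (fun k => hp0 _ k)
  set W : Matrix (Fin n) (Fin n) ℂ := Matrix.of (fun j k => x k j) with hWdef
  have hdetW := (Matrix.isUnit_iff_isUnit_det W).mp hWu
  have hdiagW : W⁻¹ * S * W = Matrix.diagonal μ := by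
    rw [Matrix.mul_assoc, hWm, ← Matrix.mul_assoc, Matrix.nonsing_inv_mul _ hdetW,
      Matrix.one_mul]
  constructor
  · exact ⟨W, hWu, by rw [hdiagW]; exact Matrix.isDiag_diagonal μ⟩
    -- lower bound
  set m : ℕ := (n+1)/2 with hmdef
  have hm : 1 ≤ m ∧ m - 1 < n ∧ 2*m ≤ n+1 ∧ n+1 ≤ 3*m ∧ m ≤ n := by omega
  set ks : Fin n := ⟨m-1, hm.2.1⟩ with hksdef
  have hksv : ((ks:ℕ):ℝ) + 1 = (m:ℝ) := by
    have h1 : (ks:ℕ) = m - 1 := rfl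
    rw [h1, Nat.cast_sub hm.1]
    norm_num
  have hθeq : thA n (ks:ℕ) = (m:ℝ) * Real.pi / ((n:ℝ)+1) := by
    unfold thA; rw [hksv]
  have h13 : Real.pi/3 ≤ thA n (ks:ℕ) := by
    rw [hθeq, div_le_div_iff₀ (by norm_num) hn1]
    have hc : ((n:ℝ)+1) ≤ 3*(m:ℝ) := by exact_mod_cast hm.2.2.2.1
    nlinarith
  have h12 : thA n (ks:ℕ) ≤ Real.pi/2 := by
    rw [hθeq, div_le_div_iff₀ hn1 (by norm_num)]
    have hc : 2*(m:ℝ) ≤ (n:ℝ)+1 := by exact_mod_cast hm.2.2.1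
    nlinarith
  have hsin2 : 1/2 ≤ Real.sin (thA n (ks:ℕ)) := by
    have hs3 : Real.sin (Real.pi/3) ≤ Real.sin (thA n (ks:ℕ)) :=
      Real.sin_le_sin_of_le_of_le_pi_div_two (by linarith) h12 h13
    rw [Real.sin_pi_div_three] at hs3
    have hsq : (1:ℝ) ≤ Real.sqrt 3 := by
      rw [show (1:ℝ) = Real.sqrt 1 by rw [Real.sqrt_one]]
      exact Real.sqrt_le_sqrt (by norm_num)
    linarith
  rw [kappaV]
  apply le_csInf
  · exact ⟨‖W‖ * ‖W⁻¹‖, W, hWu, by rw [hdiagW]; exact Matrix.isDiag_diagonal μ, rfl⟩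
  rintro t ⟨V, hVu, hVd, rfl⟩
  set d : Fin n → ℂ := fun i => (V⁻¹ * S * V) i i with hddef
  have hdg : Matrix.diagonal d = V⁻¹ * S * V := hVd.diagonal_diag
  have hdetV := (Matrix.isUnit_iff_isUnit_det V).mp hVu
  have hVV : V * V⁻¹ = 1 := Matrix.mul_nonsing_inv V hdetV
  have hVV' : V⁻¹ * V = 1 := Matrix.nonsing_inv_mul V hdetV
  have hSV : S * V = V * Matrix.diagonal d := by
    rw [hdg, ← Matrix.mul_assoc, ← Matrix.mul_assoc, hVV, Matrix.one_mul]
  have hdV : Matrix.diagonal d * V⁻¹ = V⁻¹ * S := by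
    rw [hdg, Matrix.mul_assoc, hVV, Matrix.mul_one]
  have hdet_eq : ∀ z : ℂ, (S - z • 1).det = ∏ i, (d i - z) := by
    intro z
    have hdd : Matrix.diagonal (fun i => d i - z) = Matrix.diagonal d - z • 1 := by
      ext i j
      by_cases h : i = j
      · subst h
        simp [Matrix.diagonal_apply_eq, Matrix.one_apply_eq]
      · simp [Matrix.diagonal_apply_ne _ h, Matrix.one_apply_ne h]
    have hfac : S - z • 1 = V * Matrix.diagonal (fun i => d i - z) * V⁻¹ := by
      rw [hdd, Matrix.mul_sub, Matrix.sub_mul]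
      congr 1
      · rw [← hSV, Matrix.mul_assoc, hVV, Matrix.mul_one]
      · rw [Matrix.mul_smul, Matrix.mul_one, Matrix.smul_mul, hVV]
    rw [hfac, Matrix.det_mul, Matrix.det_mul, Matrix.det_diagonal]
    have hd1 : V.det * V⁻¹.det = 1 := by rw [← Matrix.det_mul, hVV, Matrix.det_one]
    calc V.det * (∏ i, (d i - z)) * V⁻¹.det
        = (∏ i, (d i - z)) * (V.det * V⁻¹.det) := by ring
      _ = ∏ i, (d i - z) := by rw [hd1, mul_one]
  have hroot : ∃ i, d i = μ ks := by
    have h0 : (S - μ ks • 1).det = 0 := by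
      rw [← Matrix.exists_mulVec_eq_zero_iff]
      refine ⟨x ks, hp0 _ ks, ?_⟩
      rw [Matrix.sub_mulVec, Matrix.smul_mulVec, Matrix.one_mulVec, hx ks, sub_self]
    rw [hdet_eq] at h0
    obtain ⟨i, -, hi⟩ := Finset.prod_eq_zero_iff.mp h0
    exact ⟨i, sub_eq_zero.mp hi⟩
  obtain ⟨iS, hiS⟩ := hroot
  set v : Fin n → ℂ := fun j => V j iS with hvdef
  set w : Fin n → ℂ := fun j => V⁻¹ iS j with hwdef
  have hv : S *ᵥ v = μ ks • v := by
    funext j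
    have h1 := congrFun (congrFun hSV j) iS
    rw [Matrix.mul_apply, Matrix.mul_diagonal] at h1
    have h2 : (S *ᵥ v) j = ∑ l, S j l * V l iS := rfl
    show (S *ᵥ v) j = μ ks * v j
    rw [h2, h1, hiS]
    show V j iS * μ ks = μ ks * V j iS
    ring
  have hw : Sᵀ *ᵥ w = μ ks • w := by
    funext j
    have h1 := congrFun (congrFun hdV iS) j
    rw [Matrix.diagonal_mul, Matrix.mul_apply] at h1
    have h2 : (Sᵀ *ᵥ w) j = ∑ l, V⁻¹ iS l * S l j := by
      show ∑ l, Sᵀ j l * V⁻¹ iS l = _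
      exact Finset.sum_congr rfl fun l _ => by rw [Matrix.transpose_apply]; ring
    show (Sᵀ *ᵥ w) j = μ ks * w j
    rw [h2, ← h1, hiS]
  obtain ⟨a, hva⟩ := hWspan ks v hv
  obtain ⟨b, hwb⟩ := hYspan ks w hw
  have hone : a * b * (∑ j, x ks j * y ks j) = 1 := by
    have h1 : (V⁻¹ * V) iS iS = (1 : Matrix (Fin n) (Fin n) ℂ) iS iS := by rw [hVV']
    rw [Matrix.mul_apply, Matrix.one_apply_eq] at h1
    have h2 : ∀ j, V⁻¹ iS j * V j iS = (a*b) * (x ks j * y ks j) := by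
      intro j
      have hv' : V j iS = a * x ks j := by
        show v j = a * x ks j
        rw [hva]; rfl
      have hw' : V⁻¹ iS j = b * y ks j := by
        show w j = b * y ks j
        rw [hwb]; rfl
      rw [hv', hw']; ring
    rw [Finset.sum_congr rfl (fun j _ => h2 j), ← Finset.mul_sum] at h1
    exact h1
  set R : ℝ := ∑ j : Fin n, (Real.sin ((((j:ℕ):ℝ)+1) * thA n (ks:ℕ)))^2 with hRdef
  have hcR : (∑ j, x ks j * y ks j) = (R : ℂ) := by
    have hterm : ∀ j : Fin n, x ks j * y ks j
        = ((Real.sin ((((j:ℕ):ℝ)+1) * thA n (ks:ℕ)))^2 : ℝ) := by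
      intro j
      show (pA n 2⁻¹ ks j) * (pA n 2 ks j) = _
      simp only [pA]
      have hpow : ((2⁻¹:ℂ))^(j:ℕ) * (2:ℂ)^(j:ℕ) = 1 := by
        rw [← mul_pow]; norm_num
      set sj : ℂ := (Real.sin ((((j:ℕ):ℝ)+1) * thA n (ks:ℕ)) : ℂ) with hsjdef
      rw [Complex.ofReal_pow]
      calc (2⁻¹:ℂ)^(j:ℕ) * sj * ((2:ℂ)^(j:ℕ) * sj)
          = ((2⁻¹:ℂ)^(j:ℕ) * (2:ℂ)^(j:ℕ)) * (sj * sj) := by ring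
        _ = sj^2 := by rw [hpow, one_mul, sq]
    rw [Finset.sum_congr rfl (fun j _ => hterm j), hRdef]
    norm_cast
  have hR0 : (0:ℝ) ≤ R := Finset.sum_nonneg fun j _ => sq_nonneg _
  have hRn : R ≤ (n:ℝ) := by
    calc R ≤ ∑ _j : Fin n, (1:ℝ) := by
          refine Finset.sum_le_sum fun j _ => ?_
          have h1 := Real.sin_le_one ((((j:ℕ):ℝ)+1) * thA n (ks:ℕ))
          have h2 := Real.neg_one_le_sin ((((j:ℕ):ℝ)+1) * thA n (ks:ℕ))
          nlinarith
      _ = (n:ℝ) := by simp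
  rw [hcR] at hone
  have hRne : R ≠ 0 := by
    intro h
    rw [h] at hone
    simp at hone
  have hRpos : 0 < R := lt_of_le_of_ne hR0 (Ne.symm hRne)
  have habs : ‖a‖ * ‖b‖ * R = 1 := by
    have h := congrArg norm hone
    rw [norm_mul, norm_mul, norm_one, Complex.norm_real, Real.norm_eq_abs,
      abs_of_pos hRpos] at h
    exact h
  -- entry values
  set j0 : Fin n := ⟨0, by omega⟩ with hj0def
  set jN : Fin n := ⟨n-1, by omega⟩ with hjNdef
  have hxj0 : x ks j0 = ((Real.sin (thA n (ks:ℕ)) : ℝ) : ℂ) := by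
    show pA n 2⁻¹ ks j0 = _
    simp only [pA]
    norm_num
  have hyjN : y ks jN = (2:ℂ)^(n-1) * ((Real.sin ((n:ℝ) * thA n (ks:ℕ)) : ℝ) : ℂ) := by
    show pA n 2 ks jN = _
    simp only [pA]
    have hc : (((jN:ℕ)):ℝ) + 1 = (n:ℝ) := by
      have h1 : (jN:ℕ) = n - 1 := rfl
      rw [h1, Nat.cast_sub (by omega : 1 ≤ n)]
      norm_num
    rw [hc]
  have hsinN : |Real.sin ((n:ℝ) * thA n (ks:ℕ))| = Real.sin (thA n (ks:ℕ)) := by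
    have harg : (n:ℝ) * thA n (ks:ℕ) = (m:ℝ) * Real.pi - thA n (ks:ℕ) := by
      rw [hθeq]
      field_simp
      ring
    rw [harg, Real.sin_nat_mul_pi_sub, abs_neg, abs_mul, abs_pow, abs_neg, abs_one,
      one_pow, one_mul]
    exact abs_of_pos (hsin ks)
  have hVj0 : V j0 iS = a * x ks j0 := by
    show v j0 = a * x ks j0
    rw [hva]; rfl
  have hViN : V⁻¹ iS jN = b * y ks jN := by
    show w jN = b * y ks jN
    rw [hwb]; rfl
  have hval1 : ‖V j0 iS‖ = ‖a‖ * Real.sin (thA n (ks:ℕ)) := by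
    rw [hVj0, norm_mul, hxj0, Complex.norm_real, Real.norm_eq_abs, abs_of_pos (hsin ks)]
  have hval2 : ‖V⁻¹ iS jN‖ = ‖b‖ * ((2:ℝ)^(n-1) * Real.sin (thA n (ks:ℕ))) := by
    rw [hViN, norm_mul, hyjN, norm_mul, norm_pow, Complex.norm_real, Real.norm_eq_abs,
      hsinN]
    norm_num
  have hb1 : ‖V j0 iS‖ ≤ ‖V‖ := aux_entry_le_norm V j0 iS
  have hb2 : ‖V⁻¹ iS jN‖ ≤ ‖V⁻¹‖ := aux_entry_le_norm V⁻¹ iS jN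
  -- final numeric computation
  have hPpos : (0:ℝ) < 2^(n-1) := by positivity
  have hnpos : (0:ℝ) < (n:ℝ) := by positivity
  have hAB : ‖a‖ * ‖b‖ = 1/R := by
    rw [eq_div_iff hRne]
    linarith
  calc (2:ℝ)^n / ((n:ℝ)+1)^3 ≤ (2:ℝ)^(n-1) / (4*(n:ℝ)) := by
        rw [div_le_div_iff₀ (by positivity) (by positivity)]
        have h2 : (2:ℝ)^n = 2 * 2^(n-1) := by
          conv_lhs => rw [show n = (n-1)+1 by omega]
          rw [pow_succ]
          ring
        have h2n : (2:ℝ) ≤ (n:ℝ) := by exact_mod_cast hn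
        have hsq : 2*(n:ℝ) ≤ (n:ℝ)^2 := by nlinarith [mul_nonneg hnpos.le (sub_nonneg.mpr h2n)]
        have hcube : 2*(n:ℝ)^2 ≤ (n:ℝ)^3 := by
          nlinarith [mul_nonneg (mul_nonneg hnpos.le hnpos.le) (sub_nonneg.mpr h2n)]
        have hkey : 8*(n:ℝ) ≤ ((n:ℝ)+1)^3 := by nlinarith [hsq, hcube]
        rw [h2]
        nlinarith [mul_le_mul_of_nonneg_left hkey hPpos.le]
    _ ≤ ‖V j0 iS‖ * ‖V⁻¹ iS jN‖ := by
        rw [hval1, hval2]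
        set s : ℝ := Real.sin (thA n (ks:ℕ)) with hsdef
        have hss : 1/4 ≤ s*s := by nlinarith
        have hrhs : (‖a‖ * s) * (‖b‖ * ((2:ℝ)^(n-1) * s))
            = ((2:ℝ)^(n-1) * (s*s)) / R := by
          rw [show (‖a‖ * s) * (‖b‖ * ((2:ℝ)^(n-1) * s))
              = (‖a‖ * ‖b‖) * ((2:ℝ)^(n-1) * (s*s)) by ring, hAB]
          ring
        rw [hrhs, div_le_div_iff₀ (by positivity) hRpos]
        nlinarith [mul_le_mul_of_nonneg_left hss (by positivity : (0:ℝ) ≤ 4*(n:ℝ)*2^(n-1)),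
          mul_le_mul_of_nonneg_left hRn hPpos.le]
    _ ≤ ‖V‖ * ‖V⁻¹‖ := mul_le_mul hb1 hb2 (norm_nonneg _) (norm_nonneg _)
end
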